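/- Let z ∈ ℂ with Re(z) < 0. Let (a_k), (b_k) be complex numbers lying in the closed cone spanned by 1 and −1/z (i.e., each is of the form s − t/z with s, t ≥ 0), and let (d_k) be nonnegative reals with ∑_k d_k/|(1+a_k)(1+b_k)| < ∞. Then |z − ∑_k d_k/((1+a_k)(1+b_k))| ≥ |z|. -/

import Mathlib

open Complex

lemma inv_cone (z : ℂ) (hz : z.re < 0) (s t : ℝ) (hs : 0 ≤ s) (ht : 0 ≤ t) :
    ∃ p q : ℝ, 0 ≤ p ∧ 0 ≤ q ∧ (1 + ((s:ℂ) - t/z))⁻¹ = (p:ℂ) - q*z := by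
  have hz0 : z ≠ 0 := fun h => by simp [h] at hz
  set w : ℂ := (1+s)*z - t with hw
  have hwre : w.re < 0 := by
    have : w.re = (1+s)*z.re - t := by simp [hw]
    rw [this]; nlinarith
  have hw0 : w ≠ 0 := fun h => by simp [h] at hwre
  have hns : 0 < Complex.normSq w := normSq_pos.2 hw0
  have hnz : 0 < Complex.normSq z := normSq_pos.2 hz0
  refine ⟨(1+s)*Complex.normSq z / Complex.normSq w, t / Complex.normSq w, by positivity,
    by positivity, ?_⟩
  have h1 : 1 + ((s:ℂ) - t/z) = w / z := by field_simp [hw]; ring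
  have hcw : ((Complex.normSq w : ℝ) : ℂ) = w * (starRingEnd ℂ) w := (Complex.mul_conj w).symm
  have hcz : ((Complex.normSq z : ℝ) : ℂ) = z * (starRingEnd ℂ) z := (Complex.mul_conj z).symm
  have hcwv : (starRingEnd ℂ) w = (1+s) * (starRingEnd ℂ) z - t := by
    simp [hw, map_sub, map_mul]
  have hcw0 : (starRingEnd ℂ) w ≠ 0 := by simpa using hw0
  have e : ((((1+s)*Complex.normSq z / Complex.normSq w : ℝ)):ℂ)
      - (((t / Complex.normSq w : ℝ)):ℂ) * z
      = (((1:ℂ)+s) * ((Complex.normSq z : ℝ):ℂ) - (t:ℂ) * z) / ((Complex.normSq w : ℝ):ℂ) := by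
    push_cast; ring
  have e2 : ((1:ℂ)+s) * ((Complex.normSq z : ℝ):ℂ) - (t:ℂ) * z = (starRingEnd ℂ) w * z := by
    rw [hcz, hcwv]; ring
  rw [h1, inv_div, e, e2, hcw, div_eq_div_iff hw0 (mul_ne_zero hw0 hcw0)]
  ring

/-- cone lemma: for `Re z < 0`, `a_k, b_k` in the cone spanned by `1` and
`−1/z`, and `d_k ≥ 0`, one has `|z − ∑_k d_k/((1+a_k)(1+b_k))| ≥ |z|`. -/
theorem cone_distance_lemma (z : ℂ) (hz : z.re < 0) (a b : ℕ → ℂ) (d : ℕ → ℝ)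
    (ha : ∀ k, ∃ s t : ℝ, 0 ≤ s ∧ 0 ≤ t ∧ a k = (s : ℂ) - (t : ℂ) / z)
    (hb : ∀ k, ∃ s t : ℝ, 0 ≤ s ∧ 0 ≤ t ∧ b k = (s : ℂ) - (t : ℂ) / z)
    (hd : ∀ k, 0 ≤ d k)
    (hsum : Summable (fun k => d k / ‖(1 + a k) * (1 + b k)‖)) :
    ‖z‖ ≤ ‖z - ∑' k, (d k : ℂ) / ((1 + a k) * (1 + b k))‖ := by
  set f : ℕ → ℂ := fun k => (d k : ℂ) / ((1 + a k) * (1 + b k)) with hf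
  -- per-term: Re(conj z * f k) ≤ 0
  have hterm : ∀ k, ((starRingEnd ℂ) z * f k).re ≤ 0 := by
    intro k
    obtain ⟨s, t, hs, ht, hak⟩ := ha k
    obtain ⟨s', t', hs', ht', hbk⟩ := hb k
    obtain ⟨p, q, hp, hq, hip⟩ := inv_cone z hz s t hs ht
    obtain ⟨p', q', hp', hq', hip'⟩ := inv_cone z hz s' t' hs' ht'
    have e0 : f k = (d k : ℂ) * ((1 + ((s:ℂ) - t/z))⁻¹ * (1 + ((s':ℂ) - t'/z))⁻¹) := by
      show (d k : ℂ) / ((1 + a k) * (1 + b k)) = _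
      rw [hak, hbk, div_eq_mul_inv, mul_inv]
    rw [e0, hip, hip']
    simp only [Complex.mul_re, Complex.mul_im, Complex.sub_re, Complex.sub_im,
      Complex.ofReal_re, Complex.ofReal_im, Complex.conj_re, Complex.conj_im]
    nlinarith [mul_nonneg (mul_nonneg (mul_nonneg (hd k) hp) hp') (neg_nonneg.2 hz.le),
      mul_nonneg (mul_nonneg (mul_nonneg (hd k) hp) hq')
        (add_nonneg (sq_nonneg z.re) (sq_nonneg z.im)),
      mul_nonneg (mul_nonneg (mul_nonneg (hd k) hq) hp')
        (add_nonneg (sq_nonneg z.re) (sq_nonneg z.im)),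
      mul_nonneg (mul_nonneg (mul_nonneg (mul_nonneg (hd k) hq) hq') (neg_nonneg.2 hz.le))
        (add_nonneg (sq_nonneg z.re) (sq_nonneg z.im))]
  -- summability of f
  have hnorm : ∀ k, ‖f k‖ = d k / ‖(1 + a k) * (1 + b k)‖ := by
    intro k
    rw [hf]
    simp only [norm_div, Complex.norm_real, Real.norm_of_nonneg (hd k),
      _root_.abs_of_nonneg (hd k)]
  have hS : Summable f := by
    apply Summable.of_norm
    simpa only [hnorm] using hsum
  set S : ℂ := ∑' k, f k with hSdef
  have hre : ((starRingEnd ℂ) z * S).re ≤ 0 := by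
    rw [hSdef, ← tsum_mul_left, Complex.re_tsum (hS.mul_left _)]
    exact tsum_nonpos hterm
  have hre2 : (z * (starRingEnd ℂ) S).re ≤ 0 := by
    have : (z * (starRingEnd ℂ) S).re = ((starRingEnd ℂ) z * S).re := by
      simp only [Complex.mul_re, Complex.conj_re, Complex.conj_im]; ring
    rw [this]; exact hre
  have h2 : Complex.normSq z ≤ Complex.normSq (z - S) := by
    have hns : Complex.normSq (z - S)
        = Complex.normSq z + Complex.normSq S - 2 * (z * (starRingEnd ℂ) S).re := by
      rw [Complex.normSq_sub]
    rw [hns]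
    nlinarith [Complex.normSq_nonneg S]
  rw [Complex.norm_def, Complex.norm_def]
  exact Real.sqrt_le_sqrt h2
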